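/- arXiv:1605.05351 — 10 statements merged into one kernel-verified Lean document; each statement's English description precedes it below -/
import Mathlib

section
/- Suppose y* ≠ 0 maximizes ‖y‖² over y ∈ Ω and ȳ minimizes ‖y‖² over y ∈ D. Then: (1) the vector ȳ / ‖ȳ‖² also maximizes ‖y‖² over Ω; (2) the vector y* / ‖y*‖² also minimizes ‖y‖² over D; (3) the maximizer of ‖y‖² over Ω is unique, i.e. any point of Ω attaining the maximum of ‖y‖² over Ω equals y*. -/
open RealInnerProductSpace

private lemma norm_smul_sq_aux {n : ℕ} (c : ℝ) (x : EuclideanSpace ℝ (Fin n)) :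
    ‖c • x‖ ^ 2 = c ^ 2 * ‖x‖ ^ 2 := by
  rw [norm_smul, Real.norm_eq_abs, mul_pow, sq_abs]

/-- If `y* ≠ 0` maximizes `‖y‖²` over `Ω` and `ȳ` minimizes `‖y‖²` over `D`, then
(1) `ȳ/‖ȳ‖²` maximizes `‖y‖²` over `Ω`, (2) `y*/‖y*‖²` minimizes `‖y‖²` over `D`,
and (3) the maximizer over `Ω` is unique. -/
theorem optimal_solutions_relation
    (n m : ℕ) (hn : 0 < n) (hm : 0 < m)
    (z : Fin m → EuclideanSpace ℝ (Fin n))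
    (D Ω : Set (EuclideanSpace ℝ (Fin n)))
    (hD : D = {y | ∀ i : Fin m, 1 ≤ ⟪z i, y⟫})
    (hΩ : Ω = {y | ∀ i : Fin m, ‖y‖ ^ 2 ≤ ⟪z i, y⟫})
    (ystar ybar : EuclideanSpace ℝ (Fin n))
    (hystar : ystar ∈ Ω) (hystar0 : ystar ≠ 0)
    (hystarMax : ∀ y ∈ Ω, ‖y‖ ^ 2 ≤ ‖ystar‖ ^ 2)
    (hybar : ybar ∈ D)
    (hybarMin : ∀ y ∈ D, ‖ybar‖ ^ 2 ≤ ‖y‖ ^ 2) :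
    ((‖ybar‖ ^ 2)⁻¹ • ybar ∈ Ω ∧
      ∀ y ∈ Ω, ‖y‖ ^ 2 ≤ ‖(‖ybar‖ ^ 2)⁻¹ • ybar‖ ^ 2) ∧
    ((‖ystar‖ ^ 2)⁻¹ • ystar ∈ D ∧
      ∀ y ∈ D, ‖(‖ystar‖ ^ 2)⁻¹ • ystar‖ ^ 2 ≤ ‖y‖ ^ 2) ∧
    (∀ y ∈ Ω, (∀ w ∈ Ω, ‖w‖ ^ 2 ≤ ‖y‖ ^ 2) → y = ystar) := by
  subst hD hΩ
  set a : ℝ := ‖ybar‖ ^ 2 with ha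
  set b : ℝ := ‖ystar‖ ^ 2 with hb
  have i0 : Fin m := ⟨0, hm⟩
  have hb0 : 0 < b := by rw [hb]; exact pow_pos (norm_pos_iff.mpr hystar0) 2
  have hybar0 : ybar ≠ 0 := by
    intro h
    have := hybar i0
    rw [h, inner_zero_right] at this
    linarith
  have ha0 : 0 < a := by rw [ha]; exact pow_pos (norm_pos_iff.mpr hybar0) 2
  -- w = a⁻¹ • ybar is in Ω
  have hw_norm : ‖(a⁻¹ : ℝ) • ybar‖ ^ 2 = a⁻¹ := by
    rw [norm_smul_sq_aux, ← ha]
    field_simp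
  have hwΩ : (a⁻¹ : ℝ) • ybar ∈ {y : EuclideanSpace ℝ (Fin n) | ∀ i : Fin m, ‖y‖ ^ 2 ≤ ⟪z i, y⟫} := by
    intro i
    rw [real_inner_smul_right, hw_norm]
    have := hybar i
    have h1 : a⁻¹ * 1 ≤ a⁻¹ * ⟪z i, ybar⟫ := by
      apply mul_le_mul_of_nonneg_left this (le_of_lt (inv_pos.mpr ha0))
    linarith
  -- d = b⁻¹ • ystar is in D
  have hd_norm : ‖(b⁻¹ : ℝ) • ystar‖ ^ 2 = b⁻¹ := by
    rw [norm_smul_sq_aux, ← hb]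
    field_simp
  have hdD : (b⁻¹ : ℝ) • ystar ∈ {y : EuclideanSpace ℝ (Fin n) | ∀ i : Fin m, 1 ≤ ⟪z i, y⟫} := by
    intro i
    rw [real_inner_smul_right]
    have := hystar i
    have h1 : b⁻¹ * b ≤ b⁻¹ * ⟪z i, ystar⟫ := by
      apply mul_le_mul_of_nonneg_left this (le_of_lt (inv_pos.mpr hb0))
    rw [inv_mul_cancel₀ (ne_of_gt hb0)] at h1
    exact h1
  -- key: a * b = 1
  have h1 : a⁻¹ ≤ b := by
    have := hystarMax _ hwΩ
    rwa [hw_norm] at this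
  have h2 : a ≤ b⁻¹ := by
    have := hybarMin _ hdD
    rwa [hd_norm] at this
  have hab : a * b = 1 := by
    have e1 : 1 ≤ a * b := by
      have := mul_le_mul_of_nonneg_left h1 (le_of_lt ha0)
      rwa [mul_inv_cancel₀ (ne_of_gt ha0)] at this
    have e2 : a * b ≤ 1 := by
      have := mul_le_mul_of_nonneg_left h2 (le_of_lt hb0)
      rw [mul_inv_cancel₀ (ne_of_gt hb0), mul_comm] at this
      linarith
    linarith
  have hainv : a⁻¹ = b := by
    field_simp
    linarith [hab]
  have hbinv : b⁻¹ = a := by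
    field_simp
    linarith [hab, mul_comm a b]
  refine ⟨⟨hwΩ, ?_⟩, ⟨hdD, ?_⟩, ?_⟩
  · intro y hy
    rw [hw_norm, hainv]
    exact hystarMax y hy
  · intro y hy
    rw [hd_norm, hbinv]
    exact hybarMin y hy
  · -- uniqueness
    intro y hy hmax
    have heq : ‖y‖ ^ 2 = b := le_antisymm (hystarMax y hy) (hmax ystar hystar)
    by_contra hne
    set v : EuclideanSpace ℝ (Fin n) := (1/2 : ℝ) • (y + ystar) with hv
    set δ : ℝ := ‖(1/2 : ℝ) • (y - ystar)‖ ^ 2 with hδ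
    have hδ0 : 0 < δ := by
      rw [hδ]
      have : y - ystar ≠ 0 := sub_ne_zero.mpr hne
      have h2 : (1/2 : ℝ) • (y - ystar) ≠ 0 := smul_ne_zero (by norm_num) this
      exact pow_pos (norm_pos_iff.mpr h2) 2
    -- parallelogram: ‖v‖² + δ = b
    have hpar : ‖v‖ ^ 2 + δ = b := by
      rw [hv, hδ, norm_smul_sq_aux, norm_smul_sq_aux]
      have h1 : ‖y + ystar‖ ^ 2 = ‖y‖ ^ 2 + 2 * ⟪y, ystar⟫ + ‖ystar‖ ^ 2 := norm_add_sq_real y ystar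
      have h2 : ‖y - ystar‖ ^ 2 = ‖y‖ ^ 2 - 2 * ⟪y, ystar⟫ + ‖ystar‖ ^ 2 := norm_sub_sq_real y ystar
      rw [h1, h2, heq, ← hb]
      ring
    -- constraint: ⟪z i, v⟫ ≥ ‖v‖² + δ
    have hcon : ∀ i : Fin m, ‖v‖ ^ 2 + δ ≤ ⟪z i, v⟫ := by
      intro i
      rw [hpar, hv, real_inner_smul_right, inner_add_right]
      have := hy i
      have := hystar i
      rw [heq] at *
      linarith [hy i, hystar i]
    have hv0 : 0 < ‖v‖ ^ 2 := by
      rcases eq_or_ne v 0 with h | h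
      · exfalso
        have := hcon i0
        rw [h, inner_zero_right] at this
        nlinarith [norm_nonneg v]
      · exact pow_pos (norm_pos_iff.mpr h) 2
    set c : ℝ := ‖v‖ ^ 2 with hc
    set t : ℝ := (c + δ) / c with ht
    have ht0 : 0 < t := by positivity
    have htvΩ : t • v ∈ {y : EuclideanSpace ℝ (Fin n) | ∀ i : Fin m, ‖y‖ ^ 2 ≤ ⟪z i, y⟫} := by
      intro i
      rw [real_inner_smul_right, norm_smul_sq_aux, ← hc]
      have h1 : c + δ ≤ ⟪z i, v⟫ := hcon i
      have : t * (c + δ) ≤ t * ⟪z i, v⟫ := mul_le_mul_of_nonneg_left h1 (le_of_lt ht0)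
      have huse : t ^ 2 * c = t * (c + δ) := by
        rw [ht]
        field_simp
      linarith [this, huse]
    have hfin : t ^ 2 * c ≤ b := by
      have := hystarMax _ htvΩ
      rwa [norm_smul_sq_aux, ← hc] at this
    have hbc : b = c + δ := hpar.symm
    rw [hbc, ht] at hfin
    have : ((c + δ) / c) ^ 2 * c = (c + δ) ^ 2 / c := by
      field_simp
    rw [this] at hfin
    have : (c + δ) ^ 2 ≤ (c + δ) * c := by
      have := mul_le_mul_of_nonneg_right hfin (le_of_lt hv0)
      rwa [div_mul_cancel₀ _ (ne_of_gt hv0)] at this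
    nlinarith
end

section
/- The zero vector 0 maximizes ‖y‖² over y ∈ Ω if and only if the set D is empty. -/
open RealInnerProductSpace

/-- The zero vector maximizes `‖y‖²` over `Ω` iff `D` is empty. -/
theorem zero_maximizes_iff_D_empty
    (n m : ℕ) (hn : 0 < n) (hm : 0 < m)
    (z : Fin m → EuclideanSpace ℝ (Fin n))
    (D Ω : Set (EuclideanSpace ℝ (Fin n)))
    (hD : D = {y | ∀ i : Fin m, 1 ≤ ⟪z i, y⟫})
    (hΩ : Ω = {y | ∀ i : Fin m, ‖y‖ ^ 2 ≤ ⟪z i, y⟫}) :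
    ((0 : EuclideanSpace ℝ (Fin n)) ∈ Ω ∧
      ∀ y ∈ Ω, ‖y‖ ^ 2 ≤ ‖(0 : EuclideanSpace ℝ (Fin n))‖ ^ 2) ↔ D = ∅ := by
  subst hD hΩ
  constructor
  · rintro ⟨-, hmax⟩
    by_contra hne
    obtain ⟨y, hy⟩ := Set.nonempty_iff_ne_empty.2 hne
    have hy0 : y ≠ 0 := by
      rintro rfl
      have := hy ⟨0, hm⟩
      simp [inner_zero_right] at this
      linarith
    have hnorm : (0:ℝ) < ‖y‖ ^ 2 := pow_pos (norm_pos_iff.2 hy0) 2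
    set t : ℝ := (‖y‖ ^ 2)⁻¹ with ht
    have htpos : 0 < t := inv_pos.2 hnorm
    have hmem : t • y ∈ {y | ∀ i : Fin m, ‖y‖ ^ 2 ≤ ⟪z i, y⟫} := by
      intro i
      have h1 : (1:ℝ) ≤ ⟪z i, y⟫ := hy i
      have : ‖t • y‖ ^ 2 = t := by
        rw [norm_smul]
        rw [Real.norm_eq_abs, abs_of_pos htpos, ht, mul_pow, sq ((‖y‖ ^ 2)⁻¹), mul_assoc, inv_mul_cancel₀ hnorm.ne', mul_one]
      rw [real_inner_smul_right, this]
      nlinarith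
    have := hmax _ hmem
    have hns : ‖t • y‖ ^ 2 = t := by
      rw [norm_smul]
      rw [Real.norm_eq_abs, abs_of_pos htpos, ht, mul_pow, sq ((‖y‖ ^ 2)⁻¹), mul_assoc, inv_mul_cancel₀ hnorm.ne', mul_one]
    rw [hns] at this
    simp at this
    linarith
  · intro hDe
    constructor
    · intro i
      simp [inner_zero_right]
    · intro y hy
      simp only [norm_zero]
      by_contra h
      push_neg at h
      have hnorm : (0:ℝ) < ‖y‖ ^ 2 := by
        have : (0:ℝ) ≤ ‖y‖ ^ 2 := by positivity
        nlinarith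
      have hmem : (‖y‖ ^ 2)⁻¹ • y ∈ ({y | ∀ i : Fin m, 1 ≤ ⟪z i, y⟫} : Set _) := by
        intro i
        rw [real_inner_smul_right]
        have h1 := hy i
        rw [inv_mul_eq_div, le_div_iff₀ hnorm]
        nlinarith
      rw [hDe] at hmem
      exact hmem
end

section
/- If y* maximizes ‖y‖² over y ∈ Ω, then y* = ρ, where ρ is the point of L of minimal Euclidean norm (the projection of the origin onto L). -/
open RealInnerProductSpace

/-- If `y*` maximizes `‖y‖²` over `Ω`, then `y* = ρ`, the point of `L` of minimal norm. -/
theorem maximizer_over_Omega_is_projection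
    (n m : ℕ) (hn : 0 < n) (hm : 0 < m)
    (z : Fin m → EuclideanSpace ℝ (Fin n))
    (Ω : Set (EuclideanSpace ℝ (Fin n)))
    (hΩ : Ω = {y | ∀ i : Fin m, ‖y‖ ^ 2 ≤ ⟪z i, y⟫})
    (ystar : EuclideanSpace ℝ (Fin n))
    (hystar : ystar ∈ Ω)
    (hystarMax : ∀ y ∈ Ω, ‖y‖ ^ 2 ≤ ‖ystar‖ ^ 2)
    (ρ : EuclideanSpace ℝ (Fin n))
    (hρ : ρ ∈ convexHull ℝ (Set.range z))
    (hρMin : ∀ w ∈ convexHull ℝ (Set.range z), ‖ρ‖ ≤ ‖w‖) :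
    ystar = ρ := by
  subst hΩ
  -- Variational inequality for the projection ρ
  have hvar : ∀ w ∈ convexHull ℝ (Set.range z), 0 ≤ ⟪ρ, w - ρ⟫ := by
    intro w hw
    by_contra h
    push_neg at h
    set a := ⟪ρ, w - ρ⟫ with ha
    have hwρ : w - ρ ≠ 0 := by
      intro h0
      rw [ha, h0, inner_zero_right] at h
      exact lt_irrefl 0 h
    have hb : (0:ℝ) < ‖w - ρ‖ ^ 2 := pow_pos (norm_pos_iff.mpr hwρ) 2
    set b := ‖w - ρ‖ ^ 2 with hbdef
    set t := min 1 (-a / b) with htdef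
    have ht0 : 0 < t := lt_min one_pos (div_pos (by linarith) hb)
    have ht1 : t ≤ 1 := min_le_left _ _
    have ht2 : t ≤ -a / b := min_le_right _ _
    have hmem : (1 - t) • ρ + t • w ∈ convexHull ℝ (Set.range z) :=
      (convex_convexHull ℝ _) hρ hw (by linarith) ht0.le (by ring)
    have hnorm := hρMin _ hmem
    have hexp : ‖(1 - t) • ρ + t • w‖ ^ 2 = ‖ρ‖ ^ 2 + 2 * t * a + t ^ 2 * b := by
      have heq : (1 - t) • ρ + t • w = ρ + t • (w - ρ) := by module
      rw [heq, norm_add_sq_real, real_inner_smul_right, norm_smul,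
        Real.norm_eq_abs, abs_of_pos ht0]
      rw [ha, hbdef]
      ring
    have hsq : ‖ρ‖ ^ 2 ≤ ‖(1 - t) • ρ + t • w‖ ^ 2 := by
      have := norm_nonneg ρ
      nlinarith
    rw [hexp] at hsq
    have htb : t * b ≤ -a := (le_div_iff₀ hb).mp ht2
    nlinarith
  -- ρ ∈ Ω
  have hρΩ : ∀ i : Fin m, ‖ρ‖ ^ 2 ≤ ⟪z i, ρ⟫ := by
    intro i
    have := hvar (z i) (subset_convexHull ℝ _ (Set.mem_range_self i))
    rw [inner_sub_right, real_inner_self_eq_norm_sq] at this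
    rw [real_inner_comm]
    linarith
  have h1 : ‖ρ‖ ^ 2 ≤ ‖ystar‖ ^ 2 := hystarMax ρ hρΩ
  -- every point of the hull satisfies the inequality against ystar
  have hlin : IsLinearMap ℝ (fun w : EuclideanSpace ℝ (Fin n) => ⟪w, ystar⟫) :=
    ⟨fun x y => inner_add_left x y ystar, fun c x => real_inner_smul_left x ystar c⟩
  have hhull : ∀ w ∈ convexHull ℝ (Set.range z), ‖ystar‖ ^ 2 ≤ ⟪w, ystar⟫ := by
    intro w hw
    refine convexHull_min ?_ (convex_halfSpace_ge hlin (‖ystar‖ ^ 2)) hw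
    rintro _ ⟨i, rfl⟩
    exact hystar i
  have h2 : ‖ystar‖ ^ 2 ≤ ⟪ρ, ystar⟫ := hhull ρ hρ
  have h3 : ‖ystar - ρ‖ ^ 2 ≤ 0 := by
    rw [norm_sub_sq_real]
    rw [real_inner_comm] at h2
    linarith
  have h4 : ystar - ρ = 0 := by
    have := sq_nonneg ‖ystar - ρ‖
    have h5 : ‖ystar - ρ‖ ^ 2 = 0 := le_antisymm h3 this
    have := pow_eq_zero_iff (n := 2) (by norm_num) |>.mp h5
    exact norm_eq_zero.mp this
  exact sub_eq_zero.mp h4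
end

section
/- The zero vector 0 maximizes ‖y‖² over y ∈ Ω if and only if 0 ∈ L. -/
open RealInnerProductSpace

/-- The zero vector maximizes `‖y‖²` over `Ω` iff `0 ∈ L = conv{z_1, …, z_m}`. -/
theorem zero_maximizes_iff_zero_mem_L
    (n m : ℕ) (hn : 0 < n) (hm : 0 < m)
    (z : Fin m → EuclideanSpace ℝ (Fin n))
    (Ω : Set (EuclideanSpace ℝ (Fin n)))
    (hΩ : Ω = {y | ∀ i : Fin m, ‖y‖ ^ 2 ≤ ⟪z i, y⟫}) :
    ((0 : EuclideanSpace ℝ (Fin n)) ∈ Ω ∧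
      ∀ y ∈ Ω, ‖y‖ ^ 2 ≤ ‖(0 : EuclideanSpace ℝ (Fin n))‖ ^ 2) ↔
      (0 : EuclideanSpace ℝ (Fin n)) ∈ convexHull ℝ (Set.range z) := by
  constructor
  · rintro ⟨h0, hmax⟩
    by_contra hL
    obtain ⟨f, u, hfu, hub⟩ := geometric_hahn_banach_point_closed
      (convex_convexHull ℝ (Set.range z))
      (((Set.finite_range z).isCompact_convexHull ℝ).isClosed) hL
    have hu : 0 < u := by simpa using hfu
    set v := (InnerProductSpace.toDual ℝ (EuclideanSpace ℝ (Fin n))).symm f with hv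
    have hfv : ∀ w : EuclideanSpace ℝ (Fin n), ⟪v, w⟫ = f w := fun w => by
      simp [hv, InnerProductSpace.toDual_symm_apply]
    have hvz : ∀ i, u < ⟪v, z i⟫ := fun i => by
      rw [hfv]; exact hub _ (subset_convexHull ℝ _ (Set.mem_range_self i))
    have hvne : v ≠ 0 := by
      intro h
      have := hvz ⟨0, hm⟩
      rw [h] at this
      simp at this
      linarith
    have hnv : (0:ℝ) < ‖v‖ ^ 2 := pow_pos (norm_pos_iff.mpr hvne) 2
    set t : ℝ := u / ‖v‖ ^ 2 with ht
    have htpos : 0 < t := div_pos hu hnv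
    have hyΩ : t • v ∈ Ω := by
      rw [hΩ]
      intro i
      have h1 : ‖t • v‖ ^ 2 = t * u := by
        rw [norm_smul]
        simp [mul_pow, abs_of_pos htpos, ht]
        field_simp
        rw [sq_abs]
      have h2 : ⟪z i, t • v⟫ = t * ⟪v, z i⟫ := by
        rw [real_inner_smul_right, real_inner_comm]
      rw [h1, h2]
      exact mul_le_mul_of_nonneg_left (le_of_lt (hvz i)) htpos.le
    have := hmax _ hyΩ
    simp only [norm_zero] at this
    have hpos : (0:ℝ) < ‖t • v‖ ^ 2 := by
      exact pow_pos (norm_pos_iff.mpr (smul_ne_zero (ne_of_gt htpos) hvne)) 2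
    simp at this
    exact this.elim (fun h => absurd h (ne_of_gt htpos)) hvne
  · intro hL
    constructor
    · rw [hΩ]; intro i; simp
    · intro y hy
      rw [hΩ] at hy
      have hconv : convexHull ℝ (Set.range z) ⊆ {w | ‖y‖ ^ 2 ≤ ⟪w, y⟫} := by
        apply convexHull_min
        · rintro w ⟨i, rfl⟩; exact hy i
        · exact convex_halfSpace_ge
            ⟨fun a b => inner_add_left a b y, fun c a => real_inner_smul_left a y c⟩ _
      have := hconv hL
      simpa using this
end

section
/- The set D = {y ∈ ℝⁿ : ⟪z_i, y⟫ ≥ 1 for all i = 1, …, m} is empty if and only if the origin 0 belongs to L. -/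
open RealInnerProductSpace

/-- `D = {y | ⟪z i, y⟫ ≥ 1 ∀ i}` is empty iff the origin belongs to `L = conv{z_1, …, z_m}`. -/
theorem D_empty_iff_zero_mem_L
    (n m : ℕ) (hn : 0 < n) (hm : 0 < m)
    (z : Fin m → EuclideanSpace ℝ (Fin n)) :
    {y : EuclideanSpace ℝ (Fin n) | ∀ i : Fin m, 1 ≤ ⟪z i, y⟫} = ∅ ↔
      (0 : EuclideanSpace ℝ (Fin n)) ∈ convexHull ℝ (Set.range z) := by
  constructor
  · intro hD
    by_contra h0
    have hclosed : IsClosed (convexHull ℝ (Set.range z)) :=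
      ((Set.finite_range z).isCompact_convexHull ℝ).isClosed
    obtain ⟨f, u, hfu, hub⟩ :=
      geometric_hahn_banach_point_closed (convex_convexHull ℝ _) hclosed h0
    have hf0 : f 0 = 0 := map_zero f
    have hu : 0 < u := by linarith [hfu, hf0.symm.le.trans hfu.le]
    obtain ⟨y, hy⟩ : ∃ y : EuclideanSpace ℝ (Fin n), ∀ x, f x = ⟪y, x⟫ :=
      ⟨(InnerProductSpace.toDual ℝ _).symm f, fun x =>
        (InnerProductSpace.toDual_symm_apply).symm⟩
    have : (u⁻¹ • y) ∈ {y : EuclideanSpace ℝ (Fin n) | ∀ i : Fin m, 1 ≤ ⟪z i, y⟫} := by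
      intro i
      have hi : u < f (z i) := hub _ (subset_convexHull ℝ _ (Set.mem_range_self i))
      rw [hy] at hi
      have : ⟪z i, u⁻¹ • y⟫ = u⁻¹ * ⟪y, z i⟫ := by
        rw [real_inner_smul_right, real_inner_comm]
      rw [this]
      calc (1 : ℝ) ≤ u⁻¹ * u := by rw [inv_mul_cancel₀ hu.ne']
        _ ≤ u⁻¹ * ⟪y, z i⟫ := by
            apply mul_le_mul_of_nonneg_left hi.le (inv_nonneg.2 hu.le)
    rw [hD] at this
    exact this
  · intro h0
    rw [Set.eq_empty_iff_forall_notMem]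
    intro y hy
    set C : Set (EuclideanSpace ℝ (Fin n)) := {x | 1 ≤ ⟪x, y⟫} with hC
    have hlin : IsLinearMap ℝ (fun x : EuclideanSpace ℝ (Fin n) => ⟪x, y⟫) :=
      ⟨fun a b => inner_add_left a b y, fun c x => real_inner_smul_left x y c⟩
    have hconv : Convex ℝ C := convex_halfSpace_ge hlin 1
    have hsub : Set.range z ⊆ C := by
      rintro _ ⟨i, rfl⟩
      exact hy i
    have h0C : (0 : EuclideanSpace ℝ (Fin n)) ∈ C :=
      convexHull_min hsub hconv h0
    simp [hC] at h0C
    linarith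
end

section
/- A vector y* ∈ D minimizes ‖y‖² over y ∈ D if and only if there exists a vector u* ∈ ℝᵐ with u* ≥ 0 (componentwise) such that 2·y* = Σ_{i=1}^m u*_i · z_i and Σ_{i=1}^m u*_i · (⟪z_i, y*⟫ − 1) = 0 (complementary slackness). -/
open RealInnerProductSpace Finset

variable {E : Type*} [NormedAddCommGroup E] [InnerProductSpace ℝ E] [FiniteDimensional ℝ E]

/-- The conic hull of finitely many vectors. -/
def coneOf {k : ℕ} (v : Fin k → E) : Set E :=
  {x | ∃ l : Fin k → ℝ, (∀ i, 0 ≤ l i) ∧ x = ∑ i, l i • v i}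

lemma isClosed_coneOf : ∀ (k : ℕ) (v : Fin k → E), IsClosed (coneOf v) := by
  intro k
  induction k using Nat.strong_induction_on with
  | _ k ih =>
  intro v
  match k with
  | 0 =>
      have : coneOf v = {0} := by
        ext x
        simp only [coneOf, Set.mem_setOf_eq, Set.mem_singleton_iff]
        constructor
        · rintro ⟨l, -, rfl⟩; simp
        · rintro rfl; exact ⟨0, fun i => le_refl _, by simp⟩
      rw [this]; exact isClosed_singleton
  | (k + 1) =>
    by_cases hLI : LinearIndependent ℝ v
    · -- linearly independent: image of closed orthant under closed embedding
      set f : (Fin (k+1) → ℝ) →ₗ[ℝ] E := Fintype.linearCombination ℝ v with hf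
      have hfapp : ∀ l, f l = ∑ i, l i • v i := by
        intro l; simp [hf, Fintype.linearCombination_apply]
      have hinj : Function.Injective f := by
        intro a b hab
        have : ∑ i, (a - b) i • v i = 0 := by
          simp only [Pi.sub_apply, sub_smul, Finset.sum_sub_distrib, ← hfapp, hab, sub_self]
        have := Fintype.linearIndependent_iff.mp hLI (a - b) this
        funext i; have := this i; simpa [sub_eq_zero] using this
      have hemb := LinearMap.isClosedEmbedding_of_injective (LinearMap.ker_eq_bot.mpr hinj) (f := f)
      have horth : IsClosed {l : Fin (k+1) → ℝ | ∀ i, 0 ≤ l i} := by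
        have : {l : Fin (k+1) → ℝ | ∀ i, 0 ≤ l i} = ⋂ i, {l | 0 ≤ l i} := by
          ext l; simp [Set.mem_iInter]
        rw [this]
        exact isClosed_iInter fun i => isClosed_le continuous_const (continuous_apply i)
      have himg : coneOf v = f '' {l | ∀ i, 0 ≤ l i} := by
        ext x
        constructor
        · rintro ⟨l, hl, rfl⟩; exact ⟨l, hl, (hfapp l).symm⟩
        · rintro ⟨l, hl, rfl⟩; exact ⟨l, hl, (hfapp l).symm⟩
      rw [himg]
      exact hemb.isClosedMap _ horth
    · -- dependent: the cone is a finite union of cones over one fewer vector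
      obtain ⟨g, hgsum, hgne⟩ := Fintype.not_linearIndependent_iff.mp hLI
      -- wlog some coordinate of g is positive
      obtain ⟨g, hgsum, hgpos⟩ :
          ∃ g : Fin (k+1) → ℝ, ∑ i, g i • v i = 0 ∧ ∃ i, 0 < g i := by
        by_cases h : ∃ i, 0 < g i
        · exact ⟨g, hgsum, h⟩
        · push_neg at h
          obtain ⟨i, hi⟩ := hgne
          refine ⟨-g, by simp [hgsum], ⟨i, ?_⟩⟩
          have := (h i).lt_of_ne hi
          simpa using this
      have hcup : coneOf v = ⋃ j : Fin (k+1), coneOf (v ∘ j.succAbove) := by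
        ext x
        constructor
        · rintro ⟨l, hl, rfl⟩
          obtain ⟨i₀, hi₀⟩ := hgpos
          set s : Finset (Fin (k+1)) := Finset.univ.filter (fun i => 0 < g i) with hs
          have hsne : s.Nonempty := ⟨i₀, Finset.mem_filter.mpr ⟨Finset.mem_univ _, hi₀⟩⟩
          obtain ⟨j, hjs, hjt⟩ := Finset.exists_mem_eq_inf' hsne (fun i => l i / g i)
          set t : ℝ := s.inf' hsne (fun i => l i / g i) with htdef
          have hgj : 0 < g j := by simpa [hs] using hjs
          have ht0 : 0 ≤ t := by
            rw [htdef]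
            apply Finset.le_inf'
            intro i hi
            have hgi : 0 < g i := by simpa [hs] using hi
            exact div_nonneg (hl i) hgi.le
          set μ : Fin (k+1) → ℝ := fun i => l i - t * g i with hμ
          have hμ0 : ∀ i, 0 ≤ μ i := by
            intro i
            by_cases hgi : 0 < g i
            · have : t ≤ l i / g i := Finset.inf'_le _ (by simp [hs, hgi])
              have := (le_div_iff₀ hgi).mp this
              simp only [hμ]; linarith
            · push_neg at hgi
              have : t * g i ≤ 0 := mul_nonpos_of_nonneg_of_nonpos ht0 hgi
              have := hl i
              simp only [hμ]; linarith
          have hμj : μ j = 0 := by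
            simp only [hμ, hjt]
            field_simp
            ring
          have hsum : ∑ i, μ i • v i = ∑ i, l i • v i := by
            simp only [hμ, sub_smul, mul_smul, Finset.sum_sub_distrib, ← Finset.smul_sum, hgsum,
              smul_zero, sub_zero]
          refine Set.mem_iUnion.mpr ⟨j, fun i => μ (j.succAbove i), fun i => hμ0 _, ?_⟩
          rw [← hsum, Fin.sum_univ_succAbove (fun i => μ i • v i) j, hμj]
          simp
        · intro hx
          obtain ⟨j, l', hl', rfl⟩ := Set.mem_iUnion.mp hx
          set L : Fin (k+1) → ℝ := j.insertNth 0 l' with hL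
          refine ⟨L, ?_, ?_⟩
          · intro i
            rcases eq_or_ne i j with rfl | hij
            · simp [hL]
            · obtain ⟨t, rfl⟩ := Fin.exists_succAbove_eq hij
              simpa [hL] using hl' t
          · rw [Fin.sum_univ_succAbove (fun i => L i • v i) j]
            simp [hL]
      rw [hcup]
      exact isClosed_iUnion_of_finite fun j => ih k (Nat.lt_succ_self k) _

lemma farkas_cone {k : ℕ} (v : Fin k → E) (x : E)
    (h : ∀ d : E, (∀ i, 0 ≤ ⟪v i, d⟫) → 0 ≤ ⟪x, d⟫) : x ∈ coneOf v := by
  by_contra hx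
  let K : ConvexCone ℝ E :=
    { carrier := coneOf v
      smul_mem' := by
        rintro c hc y ⟨l, hl, rfl⟩
        exact ⟨fun i => c * l i, fun i => mul_nonneg hc.le (hl i), by
          simp [Finset.smul_sum, mul_smul]⟩
      add_mem' := by
        rintro y ⟨l, hl, rfl⟩ y' ⟨l', hl', rfl⟩
        exact ⟨l + l', fun i => add_nonneg (hl i) (hl' i), by
          simp [add_smul, Finset.sum_add_distrib]⟩ }
  have hne : (K : Set E).Nonempty := ⟨0, ⟨fun _ => 0, fun _ => le_refl _, by simp⟩⟩
  have hcl : IsClosed (K : Set E) := isClosed_coneOf k v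
  let C : ProperCone ℝ E :=
    { carrier := coneOf v
      add_mem' := fun ha hb => K.add_mem' ha hb
      zero_mem' := ⟨fun _ => 0, fun _ => le_refl _, by simp⟩
      smul_mem' := by
        rintro c y ⟨l, hl, rfl⟩
        exact ⟨fun i => (c : ℝ) * l i, fun i => mul_nonneg c.2 (hl i), by
          simp [Finset.smul_sum, mul_smul, NNReal.smul_def]⟩
      isClosed' := hcl }
  obtain ⟨y, hy, hxy⟩ := ProperCone.hyperplane_separation' (x₀ := x) C hx
  rw [real_inner_comm] at hxy
  have hmem : ∀ i, (v i) ∈ K := by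
    intro i
    refine ⟨fun t => if t = i then 1 else 0, fun t => by positivity, ?_⟩
    simp
  have h0 : 0 ≤ ⟪x, y⟫ := h y fun i => hy (v i) (hmem i)
  rw [real_inner_comm] at h0
  linarith

open RealInnerProductSpace

/-- KKT conditions: `y* ∈ D` minimizes `‖y‖²` over `D` iff there is `u* ≥ 0` with
`2 y* = Σ u*_i z_i` and `Σ u*_i (⟪z_i, y*⟫ - 1) = 0`. -/
theorem min_norm_over_D_iff_KKT
    (n m : ℕ) (hn : 0 < n) (hm : 0 < m)
    (z : Fin m → EuclideanSpace ℝ (Fin n))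
    (D : Set (EuclideanSpace ℝ (Fin n)))
    (hD : D = {y | ∀ i : Fin m, 1 ≤ ⟪z i, y⟫})
    (ystar : EuclideanSpace ℝ (Fin n))
    (hystar : ystar ∈ D) :
    (∀ y ∈ D, ‖ystar‖ ^ 2 ≤ ‖y‖ ^ 2) ↔
      ∃ u : Fin m → ℝ, (∀ i, 0 ≤ u i) ∧
        (2 : ℝ) • ystar = ∑ i, u i • z i ∧
        ∑ i, u i * (⟪z i, ystar⟫ - 1) = 0 := by
  classical
  constructor
  · intro hmin
    -- Step 1: variational inequality for feasible directions at active constraints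
    have hvar : ∀ d : EuclideanSpace ℝ (Fin n),
        (∀ i, ⟪z i, ystar⟫ = 1 → 0 ≤ ⟪z i, d⟫) → 0 ≤ ⟪ystar, d⟫ := by
      intro d hd
      by_contra hneg
      push_neg at hneg
      haveI : Nonempty (Fin m) := ⟨⟨0, hm⟩⟩
      set t0 : ℝ := (-⟪ystar, d⟫) / (‖d‖ ^ 2 + 1) with ht0def
      have ht0 : 0 < t0 := div_pos (by linarith) (by positivity)
      set c : Fin m → ℝ := fun i => if ⟪z i, ystar⟫ = 1 then t0
        else (⟪z i, ystar⟫ - 1) / (1 + |⟪z i, d⟫|) with hc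
      have hcpos : ∀ i, 0 < c i := by
        intro i
        by_cases hi : ⟪z i, ystar⟫ = 1
        · simp only [hc, hi, if_pos rfl]; simpa using ht0
        · have h1 : 1 ≤ ⟪z i, ystar⟫ := by rw [hD] at hystar; exact hystar i
          have hgt : 1 < ⟪z i, ystar⟫ := lt_of_le_of_ne h1 (Ne.symm hi)
          simp only [hc, hi, if_false]
          exact div_pos (by linarith) (by positivity)
      set t : ℝ := min t0 (Finset.univ.inf' Finset.univ_nonempty c) with htdef
      have htpos : 0 < t := lt_min ht0 ((Finset.lt_inf'_iff _).mpr fun i _ => hcpos i)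
      have htle : ∀ i, t ≤ c i := fun i =>
        (min_le_right _ _).trans (Finset.inf'_le _ (Finset.mem_univ i))
      have hmemD : ystar + t • d ∈ D := by
        rw [hD]
        intro i
        have hrw : ⟪z i, ystar + t • d⟫ = ⟪z i, ystar⟫ + t * ⟪z i, d⟫ := by
          rw [inner_add_right, real_inner_smul_right]
        show (1 : ℝ) ≤ ⟪z i, ystar + t • d⟫
        rw [hrw]
        by_cases hi : ⟪z i, ystar⟫ = 1
        · have := hd i hi
          nlinarith [htpos.le]
        · have h1 : 1 ≤ ⟪z i, ystar⟫ := by rw [hD] at hystar; exact hystar i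
          have hgt : 1 < ⟪z i, ystar⟫ := lt_of_le_of_ne h1 (Ne.symm hi)
          have hti : t ≤ (⟪z i, ystar⟫ - 1) / (1 + |⟪z i, d⟫|) := by
            have h := htle i
            simp only [hc] at h
            rwa [if_neg hi] at h
          have h2 : t * (1 + |⟪z i, d⟫|) ≤ ⟪z i, ystar⟫ - 1 :=
            (le_div_iff₀ (by positivity)).mp hti
          nlinarith [neg_abs_le (⟪z i, d⟫), abs_nonneg (⟪z i, d⟫), htpos.le,
            mul_le_mul_of_nonneg_left (neg_abs_le (⟪z i, d⟫)) htpos.le]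
      have h5 : ‖t • d‖ ^ 2 = t ^ 2 * ‖d‖ ^ 2 := by
        rw [norm_smul]; simp [mul_pow, sq_abs]
      have hexp : ‖ystar + t • d‖ ^ 2
          = ‖ystar‖ ^ 2 + 2 * (t * ⟪ystar, d⟫) + t ^ 2 * ‖d‖ ^ 2 := by
        rw [norm_add_sq_real, real_inner_smul_right, h5]
      have hge := hmin _ hmemD
      rw [hexp] at hge
      have ht0' : t ≤ t0 := min_le_left _ _
      have h6 : t * (‖d‖ ^ 2 + 1) ≤ -⟪ystar, d⟫ := (le_div_iff₀ (by positivity)).mp ht0'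
      nlinarith [mul_le_mul_of_nonneg_left h6 htpos.le, mul_pos htpos htpos]
    -- Step 2: Farkas lemma applied to the active constraints
    set w : Fin m → EuclideanSpace ℝ (Fin n) :=
      fun i => if ⟪z i, ystar⟫ = 1 then z i else 0 with hw
    have hy : ystar ∈ coneOf w := by
      apply farkas_cone
      intro d hd
      apply hvar
      intro i hi
      have h0 := hd i
      have hwz : w i = z i := by
        simp only [hw]
        rw [if_pos hi]
      rwa [hwz] at h0
    obtain ⟨l, hl, hsum⟩ := hy
    refine ⟨fun i => if ⟪z i, ystar⟫ = 1 then 2 * l i else 0, ?_, ?_, ?_⟩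
    · intro i; dsimp only; split
      · linarith [hl i]
      · exact le_refl _
    · have hterm : ∀ i, (if ⟪z i, ystar⟫ = 1 then 2 * l i else 0) • z i
          = (2 : ℝ) • (l i • w i) := by
        intro i
        by_cases hi : ⟪z i, ystar⟫ = 1
        · have hwz : w i = z i := by simp only [hw]; rw [if_pos hi]
          rw [if_pos hi, hwz, smul_smul]
        · have hwz : w i = 0 := by simp only [hw]; rw [if_neg hi]
          rw [if_neg hi, hwz, zero_smul, smul_zero, smul_zero]
      rw [Finset.sum_congr rfl fun i _ => hterm i, ← Finset.smul_sum, ← hsum]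
    · apply Finset.sum_eq_zero
      intro i _
      dsimp only
      by_cases hi : ⟪z i, ystar⟫ = 1
      · rw [if_pos hi, hi]; ring
      · rw [if_neg hi, zero_mul]
  · -- sufficiency of the KKT conditions
    rintro ⟨u, hu, h2y, hcs⟩ y hyD
    have hcan : ystar + (y - ystar) = y := by abel
    have hexp : ‖y‖ ^ 2 = ‖ystar‖ ^ 2 + 2 * ⟪ystar, y - ystar⟫ + ‖y - ystar‖ ^ 2 := by
      have := norm_add_sq_real ystar (y - ystar)
      rwa [hcan] at this
    have hkey : 0 ≤ 2 * ⟪ystar, y - ystar⟫ := by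
      have h1 : (2 : ℝ) * ⟪ystar, y - ystar⟫
          = ∑ i, u i * (⟪z i, y⟫ - ⟪z i, ystar⟫) := by
        calc (2 : ℝ) * ⟪ystar, y - ystar⟫
            = ⟪(2 : ℝ) • ystar, y - ystar⟫ := (real_inner_smul_left _ _ _).symm
          _ = ⟪∑ i, u i • z i, y - ystar⟫ := by rw [h2y]
          _ = ∑ i, u i * ⟪z i, y - ystar⟫ := by
              rw [sum_inner]; exact Finset.sum_congr rfl fun i _ => real_inner_smul_left _ _ _
          _ = ∑ i, u i * (⟪z i, y⟫ - ⟪z i, ystar⟫) := by simp [inner_sub_right]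
      have h2 : ∑ i, u i * (1 - ⟪z i, ystar⟫)
          ≤ ∑ i, u i * (⟪z i, y⟫ - ⟪z i, ystar⟫) := by
        apply Finset.sum_le_sum
        intro i _
        have hzy : 1 ≤ ⟪z i, y⟫ := by rw [hD] at hyD; exact hyD i
        have := hu i
        nlinarith
      have h3 : ∑ i, u i * (1 - ⟪z i, ystar⟫) = 0 := by
        have hneg : ∑ i, u i * (1 - ⟪z i, ystar⟫)
            = -∑ i, u i * (⟪z i, ystar⟫ - 1) := by
          rw [← Finset.sum_neg_distrib]
          exact Finset.sum_congr rfl fun i _ => by ring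
        rw [hneg, hcs, neg_zero]
      linarith
    nlinarith [sq_nonneg ‖y - ystar‖]
end

section
/- The system of inequalities ⟪z_i, y⟫ ≥ 1 (i = 1, …, m) is inconsistent (i.e. D = ∅) if and only if the dual function f(u) = (1/4)·‖Σ_{i=1}^m u_i z_i‖² − Σ_{i=1}^m u_i is unbounded from below on the nonnegative orthant {u ∈ ℝᵐ : u ≥ 0}. -/
open RealInnerProductSpace

/-- The system `⟪z i, y⟫ ≥ 1` (i = 1,…,m) is inconsistent iff the dual objective
`f(u) = (1/4)‖Σ u_i z_i‖² − Σ u_i` is unbounded from below on the nonnegative orthant. -/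
theorem D_empty_iff_dual_unbounded
    (n m : ℕ) (hn : 0 < n) (hm : 0 < m)
    (z : Fin m → EuclideanSpace ℝ (Fin n)) :
    {y : EuclideanSpace ℝ (Fin n) | ∀ i : Fin m, 1 ≤ ⟪z i, y⟫} = ∅ ↔
      ¬ ∃ M : ℝ, ∀ u : Fin m → ℝ, (∀ i, 0 ≤ u i) →
        M ≤ (1 / 4) * ‖∑ i, u i • z i‖ ^ 2 - ∑ i, u i := by
  constructor
  · intro hD
    -- D empty ⟹ 0 ∈ convex hull of the z i
    have h0 : (0 : EuclideanSpace ℝ (Fin n)) ∈ convexHull ℝ (Set.range z) := by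
      by_contra h0
      have hconv : Convex ℝ (convexHull ℝ (Set.range z)) := convex_convexHull ℝ _
      have hcl : IsClosed (convexHull ℝ (Set.range z)) :=
        ((Set.finite_range z).isCompact_convexHull ℝ).isClosed
      obtain ⟨f, c, hc0, hc⟩ := geometric_hahn_banach_point_closed hconv hcl h0
      have hc0' : 0 < c := by simpa using hc0
      set v := (InnerProductSpace.toDual ℝ (EuclideanSpace ℝ (Fin n))).symm f with hv
      have hvf : ∀ x, ⟪v, x⟫ = f x := fun x =>
        InnerProductSpace.toDual_symm_apply
      have hy : ∀ i, 1 ≤ ⟪z i, c⁻¹ • v⟫ := by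
        intro i
        have hzi : z i ∈ convexHull ℝ (Set.range z) :=
          subset_convexHull ℝ _ ⟨i, rfl⟩
        have : c < f (z i) := hc _ hzi
        rw [real_inner_comm, real_inner_smul_left, hvf]
        have h1 : (1:ℝ) = c⁻¹ * c := by field_simp
        rw [h1]
        exact mul_le_mul_of_nonneg_left (hc _ hzi).le (inv_nonneg.mpr hc0'.le)
      exact absurd hD (by
        rw [Set.eq_empty_iff_forall_notMem]
        push_neg
        exact ⟨c⁻¹ • v, hy⟩)
    rw [convexHull_range_eq_exists_affineCombination] at h0
    obtain ⟨s, w, hw0, hw1, hw⟩ := h0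
    rw [Finset.affineCombination_eq_linear_combination s z w hw1] at hw
    -- weights u on all of Fin m
    set u : Fin m → ℝ := fun i => if i ∈ s then w i else 0 with hu
    have hu0 : ∀ i, 0 ≤ u i := by
      intro i; simp only [hu]; split
      · exact hw0 _ ‹_›
      · exact le_rfl
    have husum : ∑ i, u i = 1 := by
      rw [← hw1]
      rw [Finset.sum_ite_mem, Finset.univ_inter]
    have huz : ∑ i, u i • z i = 0 := by
      rw [← hw]
      have hcongr : ∑ i, u i • z i = ∑ i, (if i ∈ s then w i • z i else 0) := by
        apply Finset.sum_congr rfl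
        intro i _
        simp only [hu]; split <;> simp
      rw [hcongr, Finset.sum_ite_mem, Finset.univ_inter]
    rintro ⟨M, hM⟩
    have key := hM ((|M| + 1) • u) (fun i => mul_nonneg (by positivity) (hu0 i))
    have hsum : ∑ i, (|M| + 1) • u i • z i = (0 : EuclideanSpace ℝ (Fin n)) := by
      rw [← Finset.smul_sum, huz, smul_zero]
    simp only [Pi.smul_apply, smul_eq_mul, mul_smul] at key
    rw [show (∑ i, ((|M| + 1) • (u i • z i)) : EuclideanSpace ℝ (Fin n))
          = 0 from hsum] at key
    rw [← Finset.mul_sum, husum, mul_one, norm_zero] at key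
    have : |M| + 1 ≤ -M := by linarith [key]
    have := abs_nonneg M
    have := neg_abs_le M
    linarith
  · intro hU
    rw [Set.eq_empty_iff_forall_notMem]
    intro y hy
    apply hU
    refine ⟨-‖y‖ ^ 2, fun u hu => ?_⟩
    set sVec := ∑ i, u i • z i with hs
    have hsum : ∑ i, u i ≤ ‖sVec‖ * ‖y‖ := by
      have h1 : ∑ i, u i ≤ ⟪sVec, y⟫ := by
        rw [hs, sum_inner]
        apply Finset.sum_le_sum
        intro i _
        rw [real_inner_smul_left]
        calc u i = u i * 1 := (mul_one _).symm
          _ ≤ u i * ⟪z i, y⟫ := by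
              exact mul_le_mul_of_nonneg_left (hy i) (hu i)
      exact h1.trans (real_inner_le_norm _ _)
    nlinarith [norm_nonneg sVec, norm_nonneg y, sq_nonneg (‖sVec‖ - 2 * ‖y‖)]
end

section
/- The function f(u) = (1/4)·‖Σ_{i=1}^m u_i z_i‖² − Σ_{i=1}^m u_i is unbounded from below on the nonnegative orthant {u ∈ ℝᵐ : u ≥ 0} if and only if the origin 0 belongs to L. -/
open RealInnerProductSpace

/-- The dual objective `f(u) = (1/4)‖Σ u_i z_i‖² − Σ u_i` is unbounded from below on the
nonnegative orthant iff the origin belongs to `L = conv{z_1, …, z_m}`. -/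
theorem dual_unbounded_iff_zero_mem_L
    (n m : ℕ) (hn : 0 < n) (hm : 0 < m)
    (z : Fin m → EuclideanSpace ℝ (Fin n)) :
    (¬ ∃ M : ℝ, ∀ u : Fin m → ℝ, (∀ i, 0 ≤ u i) →
        M ≤ (1 / 4) * ‖∑ i, u i • z i‖ ^ 2 - ∑ i, u i) ↔
      (0 : EuclideanSpace ℝ (Fin n)) ∈ convexHull ℝ (Set.range z) := by
  constructor
  · -- contrapositive: 0 ∉ conv → bounded below
    intro h
    by_contra h0
    apply h
    -- setup δ
    set L : Set (EuclideanSpace ℝ (Fin n)) := convexHull ℝ (Set.range z) with hL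
    have hfin : (Set.range z).Finite := Set.finite_range z
    have hcpt : IsCompact L := hfin.isCompact_convexHull (𝕜 := ℝ)
    have hne : L.Nonempty := by
      refine ⟨z ⟨0, hm⟩, subset_convexHull ℝ _ ⟨⟨0, hm⟩, rfl⟩⟩
    have hclosed : IsClosed L := hcpt.isClosed
    have hδ : 0 < Metric.infDist (0 : EuclideanSpace ℝ (Fin n)) L :=
      (hclosed.notMem_iff_infDist_pos hne).1 h0
    set δ := Metric.infDist (0 : EuclideanSpace ℝ (Fin n)) L with hδdef
    refine ⟨-(1 / δ ^ 2), fun u hu => ?_⟩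
    by_cases hs : ∑ i, u i = 0
    · have hz0 : ∀ i, u i = 0 := by
        intro i
        have := Finset.sum_eq_zero_iff_of_nonneg (fun i _ => hu i) |>.1 hs i (Finset.mem_univ i)
        exact this
      have : ∑ i, u i • z i = 0 := by
        apply Finset.sum_eq_zero
        intro i _
        rw [hz0 i, zero_smul]
      rw [this, hs]
      simp only [norm_zero, sub_zero]
      have hp : 0 < δ ^ 2 := by positivity
      have : 0 < 1 / δ ^ 2 := by positivity
      nlinarith
    · have hspos : 0 < ∑ i, u i :=
        lt_of_le_of_ne (Finset.sum_nonneg fun i _ => hu i) (Ne.symm hs)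
      have hmem : Finset.univ.centerMass u z ∈ L :=
        Finset.centerMass_mem_convexHull _ (fun i _ => hu i) hspos
          (fun i _ => Set.mem_range_self i)
      have hdist : δ ≤ ‖Finset.univ.centerMass u z‖ := by
        have := Metric.infDist_le_dist_of_mem hmem (x := (0 : EuclideanSpace ℝ (Fin n)))
        simpa [dist_eq_norm] using this
      have hcm : Finset.univ.centerMass u z = (∑ i, u i)⁻¹ • ∑ i, u i • z i := by
        rw [Finset.centerMass]
      have hnorm : (∑ i, u i) * δ ≤ ‖∑ i, u i • z i‖ := by
        have h1 : ‖Finset.univ.centerMass u z‖ = (∑ i, u i)⁻¹ * ‖∑ i, u i • z i‖ := by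
          rw [hcm, norm_smul, Real.norm_eq_abs, abs_inv, abs_of_pos hspos]
        rw [h1] at hdist
        have h2 := mul_le_mul_of_nonneg_left hdist hspos.le
        rwa [← mul_assoc, mul_inv_cancel₀ (ne_of_gt hspos), one_mul] at h2
      have hnn : (0:ℝ) ≤ ‖∑ i, u i • z i‖ := norm_nonneg _
      have hsq : ((∑ i, u i) * δ) ^ 2 ≤ ‖∑ i, u i • z i‖ ^ 2 := by
        apply pow_le_pow_left₀ (by positivity) hnorm
      have hδ2 : 0 < δ ^ 2 := by positivity
      have hc : δ ^ 2 * (1 / δ ^ 2) = 1 := by field_simp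
      have key : -(1/δ^2) ≤ (1/4) * ((∑ i, u i) * δ)^2 - ∑ i, u i := by
        nlinarith [sq_nonneg ((∑ i, u i) * δ ^ 2 - 2), hc, hδ2,
          mul_pos hδ2 hδ2, sq_nonneg ((∑ i, u i) * δ)]
      nlinarith
  · rintro hmem ⟨M, hM⟩
    rw [convexHull_range_eq_exists_affineCombination] at hmem
    obtain ⟨s, w, hw₀, hw₁, hwz⟩ := hmem
    set w' : Fin m → ℝ := fun i => if i ∈ s then w i else 0 with hw'
    have hw'₀ : ∀ i, 0 ≤ w' i := by
      intro i; simp only [hw']; split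
      · exact hw₀ _ ‹_›
      · exact le_refl 0
    have hw'sum : ∑ i, w' i = 1 := by
      rw [hw', Finset.sum_ite_mem, Finset.univ_inter, hw₁]
    have hw'z : ∑ i, w' i • z i = 0 := by
      have := Finset.affineCombination_eq_linear_combination s z w hw₁
      rw [this] at hwz
      calc ∑ i, w' i • z i = ∑ i ∈ s, w i • z i := by
            simp only [hw', ite_smul, zero_smul]
            rw [Finset.sum_ite_mem, Finset.univ_inter]
          _ = 0 := hwz
    -- use u = t • w' with t = 1 - M
    set t : ℝ := max 0 (1 - M) with ht
    have htn : 0 ≤ t := le_max_left _ _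
    have := hM (fun i => t * w' i) (fun i => mul_nonneg htn (hw'₀ i))
    have hzz : ∑ i, (t * w' i) • z i = 0 := by
      simp_rw [mul_smul]
      rw [← Finset.smul_sum, hw'z, smul_zero]
    have hss : ∑ i, t * w' i = t := by
      rw [← Finset.mul_sum, hw'sum, mul_one]
    rw [hzz, hss] at this
    simp only [norm_zero] at this
    have : M ≤ -t := by linarith [this]
    have h1M : 1 - M ≤ t := le_max_right _ _
    linarith
end

section
/- Let c* maximize t_L(c) over the unit sphere {c ∈ ℝⁿ : ‖c‖ = 1}. Then: (1) if t_L(c*) > 0, the projection of the origin onto L equals c* · t_L(c*); (2) if t_L(c*) ≤ 0, the projection of the origin onto L equals 0 (i.e. 0 ∈ L). -/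
open RealInnerProductSpace

/-- Let `c*` maximize `t_L(c) = min_i ⟪c, z_i⟫` over the unit sphere. Then:
(1) if `t_L(c*) > 0`, the projection `ρ` of the origin onto `L` equals `t_L(c*) • c*`;
(2) if `t_L(c*) ≤ 0`, then `ρ = 0`. -/
theorem projection_via_sphere_maximin
    (n m : ℕ) (hn : 0 < n) (hm : 0 < m)
    (z : Fin m → EuclideanSpace ℝ (Fin n))
    (tL : EuclideanSpace ℝ (Fin n) → ℝ)
    (htL : ∀ c, tL c = ⨅ i : Fin m, ⟪c, z i⟫)
    (cstar : EuclideanSpace ℝ (Fin n))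
    (hcstar : ‖cstar‖ = 1)
    (hcstarMax : ∀ c : EuclideanSpace ℝ (Fin n), ‖c‖ = 1 → tL c ≤ tL cstar)
    (ρ : EuclideanSpace ℝ (Fin n))
    (hρ : ρ ∈ convexHull ℝ (Set.range z))
    (hρMin : ∀ w ∈ convexHull ℝ (Set.range z), ‖ρ‖ ≤ ‖w‖) :
    (0 < tL cstar → ρ = tL cstar • cstar) ∧
    (tL cstar ≤ 0 → ρ = 0) := by
  haveI : Nonempty (Fin m) := Fin.pos_iff_nonempty.mp hm
  -- (A) tL c is a lower bound for ⟪c, ·⟫ on the hull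
  have lemA : ∀ c : EuclideanSpace ℝ (Fin n), ∀ w ∈ convexHull ℝ (Set.range z),
      tL c ≤ ⟪c, w⟫ := by
    intro c w hw
    have hlin : IsLinearMap ℝ (fun w : EuclideanSpace ℝ (Fin n) => ⟪c, w⟫) :=
      ⟨fun x y => inner_add_right c x y, fun a x => real_inner_smul_right c x a⟩
    have hconv : Convex ℝ {w : EuclideanSpace ℝ (Fin n) | tL c ≤ ⟪c, w⟫} :=
      convex_halfSpace_ge hlin (tL c)
    have hsub : Set.range z ⊆ {w : EuclideanSpace ℝ (Fin n) | tL c ≤ ⟪c, w⟫} := by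
      rintro _ ⟨i, rfl⟩
      have : BddBelow (Set.range fun i : Fin m => ⟪c, z i⟫) := Set.Finite.bddBelow (Set.finite_range _)
      simpa [htL] using ciInf_le this i
    exact convexHull_min hsub hconv hw
  -- (B) projection characterization: ⟪ρ, w⟫ ≥ ‖ρ‖²
  have lemB : ∀ w ∈ convexHull ℝ (Set.range z), ‖ρ‖ ^ 2 ≤ ⟪ρ, w⟫ := by
    intro w hw
    have hK : Convex ℝ (convexHull ℝ (Set.range z)) := convex_convexHull ℝ _
    haveI : Nonempty (convexHull ℝ (Set.range z)) := ⟨⟨ρ, hρ⟩⟩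
    have hinf : ‖(0 : EuclideanSpace ℝ (Fin n)) - ρ‖ =
        ⨅ w : convexHull ℝ (Set.range z), ‖(0 : EuclideanSpace ℝ (Fin n)) - w‖ := by
      apply le_antisymm
      · apply le_ciInf
        intro ⟨x, hx⟩
        simpa using hρMin x hx
      · have : BddBelow (Set.range fun w : convexHull ℝ (Set.range z) =>
            ‖(0 : EuclideanSpace ℝ (Fin n)) - w‖) := by
          refine ⟨0, ?_⟩
          rintro _ ⟨x, rfl⟩
          positivity
        exact ciInf_le this ⟨ρ, hρ⟩
    have := (norm_eq_iInf_iff_real_inner_le_zero hK hρ).mp hinf w hw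
    have h2 : ⟪(0 : EuclideanSpace ℝ (Fin n)) - ρ, w - ρ⟫ ≤ 0 := this
    have h3 : ⟪ρ, w⟫ - ⟪ρ, ρ⟫ ≥ 0 := by
      have := h2
      simp only [zero_sub, inner_neg_left, inner_sub_right] at this
      linarith
    have h4 : ⟪ρ, ρ⟫ = ‖ρ‖ ^ 2 := real_inner_self_eq_norm_sq ρ
    linarith
  by_cases h0 : ρ = 0
  · constructor
    · intro ht
      have := lemA cstar ρ hρ
      rw [h0] at this
      simp at this
      linarith
    · intro _; exact h0
  · -- ρ ≠ 0
    have hρpos : 0 < ‖ρ‖ := norm_pos_iff.mpr h0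
    set c : EuclideanSpace ℝ (Fin n) := ‖ρ‖⁻¹ • ρ with hc
    have hcn : ‖c‖ = 1 := by
      rw [hc, norm_smul, norm_inv, norm_norm]
      field_simp
    have htLc : ‖ρ‖ ≤ tL c := by
      rw [htL]
      apply le_ciInf
      intro i
      have hb := lemB (z i) (subset_convexHull ℝ _ ⟨i, rfl⟩)
      have : ⟪c, z i⟫ = ‖ρ‖⁻¹ * ⟪ρ, z i⟫ := real_inner_smul_left ρ (z i) _
      rw [this]
      have h5 : ‖ρ‖⁻¹ * ‖ρ‖ ^ 2 ≤ ‖ρ‖⁻¹ * ⟪ρ, z i⟫ :=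
        mul_le_mul_of_nonneg_left hb (by positivity)
      have h6 : ‖ρ‖⁻¹ * ‖ρ‖ ^ 2 = ‖ρ‖ := by
        field_simp
      linarith
    have hmax : ‖ρ‖ ≤ tL cstar := le_trans htLc (hcstarMax c hcn)
    constructor
    · intro ht
      have hub : tL cstar ≤ ⟪cstar, ρ⟫ := lemA cstar ρ hρ
      have hcs : ⟪cstar, ρ⟫ ≤ ‖cstar‖ * ‖ρ‖ := real_inner_le_norm cstar ρ
      rw [hcstar, one_mul] at hcs
      have heq : ⟪cstar, ρ⟫ = ‖cstar‖ * ‖ρ‖ := by rw [hcstar, one_mul]; linarith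
      have := (inner_eq_norm_mul_iff_real).mp heq
      rw [hcstar, one_smul] at this
      have htv : tL cstar = ‖ρ‖ := by linarith
      rw [htv, this]
    · intro h
      linarith
end

section
/- Suppose 0 ∉ L and ĉ maximizes t_L(c) over the closed unit ball {c ∈ ℝⁿ : ‖c‖ ≤ 1}. Then: (1) t_L(ĉ) > 0; (2) the maximizer is unique, i.e. any c₁ with ‖c₁‖ ≤ 1 and t_L(c₁) = t_L(ĉ) satisfies c₁ = ĉ. -/
open RealInnerProductSpace

set_option maxHeartbeats 1000000

/-- Suppose `0 ∉ L` and `ĉ` maximizes `t_L` over the closed unit ball. Then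
(1) `t_L(ĉ) > 0` and (2) the maximizer is unique. -/
theorem ball_maximizer_positive_and_unique
    (n m : ℕ) (hn : 0 < n) (hm : 0 < m)
    (z : Fin m → EuclideanSpace ℝ (Fin n))
    (tL : EuclideanSpace ℝ (Fin n) → ℝ)
    (htL : ∀ c, tL c = ⨅ i : Fin m, ⟪c, z i⟫)
    (h0L : (0 : EuclideanSpace ℝ (Fin n)) ∉ convexHull ℝ (Set.range z))
    (chat : EuclideanSpace ℝ (Fin n))
    (hchat : ‖chat‖ ≤ 1)
    (hchatMax : ∀ c : EuclideanSpace ℝ (Fin n), ‖c‖ ≤ 1 → tL c ≤ tL chat) :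
    0 < tL chat ∧
      ∀ c₁ : EuclideanSpace ℝ (Fin n), ‖c₁‖ ≤ 1 → tL c₁ = tL chat → c₁ = chat := by
  haveI : NeZero m := ⟨hm.ne'⟩
  have hle : ∀ c a, (∀ i, a ≤ ⟪c, z i⟫) → a ≤ tL c := by
    intro c a h
    rw [htL c]; exact le_ciInf h
  have hub : ∀ c (i : Fin m), tL c ≤ ⟪c, z i⟫ := by
    intro c i
    rw [htL c]; exact ciInf_le (Finite.bddBelow_range _) i
  -- Separation: get c with positive inner products
  obtain ⟨f, u, hfu, hsep⟩ := geometric_hahn_banach_point_closed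
    ((convex_convexHull ℝ _))
    ((Set.finite_range z).isClosed_convexHull ℝ) h0L
  have hu : 0 < u := by simpa using hfu
  set c := (InnerProductSpace.toDual ℝ (EuclideanSpace ℝ (Fin n))).symm f with hc
  have hci : ∀ i, u < ⟪c, z i⟫ := by
    intro i
    rw [hc, InnerProductSpace.toDual_symm_apply]
    exact hsep _ (subset_convexHull ℝ _ ⟨i, rfl⟩)
  have hcne : c ≠ 0 := by
    intro h
    have := hci 0
    rw [h, inner_zero_left] at this
    linarith
  have hcn : 0 < ‖c‖ := norm_pos_iff.mpr hcne
  have hpos : 0 < tL chat := by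
    have h1 : ‖(‖c‖⁻¹ • c : EuclideanSpace ℝ (Fin n))‖ ≤ 1 := by
      rw [norm_smul, norm_inv, norm_norm, inv_mul_cancel₀ hcn.ne']
    have h2 : ‖c‖⁻¹ * u ≤ tL (‖c‖⁻¹ • c) := by
      apply hle
      intro i
      rw [real_inner_smul_left]
      exact mul_le_mul_of_nonneg_left (hci i).le (inv_nonneg.mpr hcn.le)
    have h3 : 0 < ‖c‖⁻¹ * u := mul_pos (inv_pos.mpr hcn) hu
    linarith [hchatMax _ h1]
  refine ⟨hpos, ?_⟩
  intro c₁ hc₁ heq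
  by_contra hne
  set t := tL chat with ht
  set d : EuclideanSpace ℝ (Fin n) := (2 : ℝ)⁻¹ • (c₁ + chat) with hd
  have hdlb : ∀ i, t ≤ ⟪d, z i⟫ := by
    intro i
    rw [hd, real_inner_smul_left, inner_add_left]
    have h1 := hub c₁ i
    have h2 := hub chat i
    rw [heq] at h1
    nlinarith
  have hdn : ‖d‖ < 1 := by
    have hsq : ‖c₁ + chat‖ ^ 2 = 2 * ‖c₁‖ ^ 2 + 2 * ‖chat‖ ^ 2 - ‖c₁ - chat‖ ^ 2 := by
      have := parallelogram_law_with_norm ℝ c₁ chat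
      nlinarith
    have hdne : 0 < ‖c₁ - chat‖ := by
      rw [norm_pos_iff, sub_ne_zero]; exact hne
    have hs1 : ‖c₁‖ ^ 2 ≤ 1 := by nlinarith [norm_nonneg c₁]
    have hs2 : ‖chat‖ ^ 2 ≤ 1 := by nlinarith [norm_nonneg chat]
    have h4 : ‖c₁ + chat‖ ^ 2 < 2 ^ 2 := by nlinarith [pow_pos hdne 2]
    have h5 : ‖c₁ + chat‖ < 2 :=
      lt_of_pow_lt_pow_left₀ 2 (by norm_num) h4
    have h6 : ‖d‖ = 2⁻¹ * ‖c₁ + chat‖ := by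
      rw [hd, norm_smul, norm_inv, Real.norm_ofNat]
    rw [h6]
    linarith
  have hd0 : d ≠ 0 := by
    intro h
    have := hdlb 0
    rw [h, inner_zero_left] at this
    linarith
  have hdp : 0 < ‖d‖ := norm_pos_iff.mpr hd0
  set e : EuclideanSpace ℝ (Fin n) := ‖d‖⁻¹ • d with he
  have hen : ‖e‖ ≤ 1 := by
    rw [he, norm_smul, norm_inv, norm_norm, inv_mul_cancel₀ hdp.ne']
  have helb : ‖d‖⁻¹ * t ≤ tL e := by
    apply hle
    intro i
    rw [he, real_inner_smul_left]
    exact mul_le_mul_of_nonneg_left (hdlb i) (inv_nonneg.mpr hdp.le)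
  have hinv : 1 < ‖d‖⁻¹ := (one_lt_inv₀ hdp).mpr hdn
  have : t < ‖d‖⁻¹ * t := by nlinarith
  linarith [hchatMax e hen]
end
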